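/- arXiv:2505.06059 — 7 statements merged into one kernel-verified Lean document; each statement's English description precedes it below -/
import Mathlib

section
/- Let (𝒞, ⊗, I) be a symmetric monoidal closed category, (F, ∇^F, η^F) and (G, ∇^G, η^G) lax monoidal endofunctors of 𝒞, and μ : F ⟶ G a monoidal natural transformation. Suppose the pullback functor μ^* : Alg^G ⥤ Alg^F has a left adjoint μ_!. If an F-algebra A is C-initial for an F-coalgebra (C, χ), then the G-algebra μ_!(A) is μ_*(C)-initial, where μ_*(C) is the pushforward G-coalgebra (C, μ_C ∘ χ). -/
open CategoryTheory Category MonoidalCategory Limits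

universe v u

namespace PaperStmt

variable {C : Type u} [Category.{v} C] [MonoidalCategory.{v} C]

/-- The pullback of a `G`-algebra along a natural transformation `ν : F ⟶ G` sends
`(A, α)` to `(A, α ∘ ν_A)` and is the identity on morphisms. -/
@[simps]
def pullbackAlg {F G : C ⥤ C} (ν : F ⟶ G) :
    Endofunctor.Algebra G ⥤ Endofunctor.Algebra F where
  obj B := ⟨B.a, ν.app B.a ≫ B.str⟩
  map {A B} g := { f := g.f, h := by simp }

/-- The pushforward of an `F`-coalgebra along `μ : F ⟶ G` sends `(C, χ)` to `(C, μ_C ∘ χ)`. -/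
@[simps]
def pushforwardCoalg {F G : C ⥤ C} (μ : F ⟶ G) :
    Endofunctor.Coalgebra F ⥤ Endofunctor.Coalgebra G where
  obj V := ⟨V.V, V.str ≫ μ.app V.V⟩
  map {V W} g := { f := g.f, h := by dsimp; rw [Category.assoc, ← μ.naturality, g.h_assoc] }

/-- `φ : C ⊗ A ⟶ B` is a measuring from the `F`-algebra `A` to the `F`-algebra `B` by the
`F`-coalgebra `Co`: `φ ∘ (id_C ⊗ α) = β ∘ F(φ) ∘ ∇_{C,A} ∘ (χ ⊗ id_{F A})`. -/
def IsMeasuring (F : C ⥤ C) [F.LaxMonoidal]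
    (Co : Endofunctor.Coalgebra F) (A B : Endofunctor.Algebra F)
    (φ : Co.V ⊗ A.a ⟶ B.a) : Prop :=
  (Co.V ◁ A.str) ≫ φ =
    (Co.str ▷ F.obj A.a) ≫ Functor.LaxMonoidal.μ F Co.V A.a ≫ F.map φ ≫ B.str

/-- The tensor product coalgebra of two `F`-coalgebras, with structure map
`∇_{D,C} ∘ (δ ⊗ χ)`. -/
def tensorCoalg (F : C ⥤ C) [F.LaxMonoidal] (D Co : Endofunctor.Coalgebra F) :
    Endofunctor.Coalgebra F :=
  ⟨D.V ⊗ Co.V, (D.str ⊗ₘ Co.str) ≫ Functor.LaxMonoidal.μ F D.V Co.V⟩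

/-- The unit coalgebra `(I, η)`. -/
def unitCoalg (F : C ⥤ C) [F.LaxMonoidal] : Endofunctor.Coalgebra F :=
  ⟨𝟙_ C, Functor.LaxMonoidal.ε F⟩

/-- An `F`-algebra `A` is `C`-initial if for every `F`-algebra `B` there is a unique
measuring `C ⊗ A ⟶ B`. -/
def IsCInitial (F : C ⥤ C) [F.LaxMonoidal]
    (Co : Endofunctor.Coalgebra F) (A : Endofunctor.Algebra F) : Prop :=
  ∀ B : Endofunctor.Algebra F, ∃! φ : Co.V ⊗ A.a ⟶ B.a, IsMeasuring F Co A B φ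

section Aux

variable [MonoidalClosed C]

/-- The internal-hom (measuring) algebra `[C, B]` for an `F`-coalgebra `Co` and an
`F`-algebra `B`. -/
noncomputable def homAlg (F : C ⥤ C) [F.LaxMonoidal] (Co : Endofunctor.Coalgebra F)
    (B : Endofunctor.Algebra F) : Endofunctor.Algebra F where
  a := (ihom Co.V).obj B.a
  str := MonoidalClosed.curry ((Co.str ▷ F.obj ((ihom Co.V).obj B.a)) ≫
    Functor.LaxMonoidal.μ F Co.V ((ihom Co.V).obj B.a) ≫
    F.map ((ihom.ev Co.V).app B.a) ≫ B.str)

@[simp] lemma homAlg_str (F : C ⥤ C) [F.LaxMonoidal] (Co : Endofunctor.Coalgebra F)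
    (B : Endofunctor.Algebra F) :
    (homAlg F Co B).str = MonoidalClosed.curry ((Co.str ▷ F.obj ((ihom Co.V).obj B.a)) ≫
      Functor.LaxMonoidal.μ F Co.V ((ihom Co.V).obj B.a) ≫
      F.map ((ihom.ev Co.V).app B.a) ≫ B.str) := rfl

lemma isMeasuring_iff_curry (F : C ⥤ C) [F.LaxMonoidal] (Co : Endofunctor.Coalgebra F)
    (A B : Endofunctor.Algebra F) (φ : Co.V ⊗ A.a ⟶ B.a) :
    IsMeasuring F Co A B φ ↔
      F.map (MonoidalClosed.curry φ) ≫ (homAlg F Co B).str =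
        A.str ≫ MonoidalClosed.curry φ := by
  have key : F.map (MonoidalClosed.curry φ) ≫ (homAlg F Co B).str =
      MonoidalClosed.curry ((Co.str ▷ F.obj A.a) ≫
        Functor.LaxMonoidal.μ F Co.V A.a ≫ F.map φ ≫ B.str) := by
    apply MonoidalClosed.uncurry_injective
    erw [MonoidalClosed.uncurry_natural_left, homAlg_str]
    rw [MonoidalClosed.uncurry_curry, MonoidalClosed.uncurry_curry,
      whisker_exchange_assoc, Functor.LaxMonoidal.μ_natural_right_assoc,
      ← Functor.map_comp_assoc, ← MonoidalClosed.uncurry_eq,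
      MonoidalClosed.uncurry_curry]
  have lhs : A.str ≫ MonoidalClosed.curry φ =
      MonoidalClosed.curry ((Co.V ◁ A.str) ≫ φ) :=
    (MonoidalClosed.curry_natural_left _ _).symm
  rw [key, lhs, IsMeasuring]
  constructor
  · intro h; rw [h]
  · intro h
    exact MonoidalClosed.curry_injective h.symm

lemma pullback_homAlg (F G : C ⥤ C) [F.LaxMonoidal] [G.LaxMonoidal]
    (ν : F ⟶ G) [NatTrans.IsMonoidal ν] (Co : Endofunctor.Coalgebra F)
    (B : Endofunctor.Algebra G) :
    (homAlg F Co ((pullbackAlg ν).obj B)).str =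
      ν.app ((ihom Co.V).obj B.a) ≫
        (homAlg G ((pushforwardCoalg ν).obj Co) B).str := by
  apply MonoidalClosed.uncurry_injective
  erw [MonoidalClosed.uncurry_natural_left (ν.app _), homAlg_str, homAlg_str]
  dsimp only [homAlg, pullbackAlg_obj_a, pullbackAlg_obj_str, pushforwardCoalg_obj_V,
    pushforwardCoalg_obj_str]
  erw [MonoidalClosed.uncurry_curry, MonoidalClosed.uncurry_curry]
  show (Co.str ▷ F.obj ((ihom Co.V).obj B.a)) ≫ Functor.LaxMonoidal.μ F Co.V ((ihom Co.V).obj B.a) ≫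
      F.map ((ihom.ev Co.V).app B.a) ≫ ν.app B.a ≫ B.str =
    (Co.V ◁ ν.app ((ihom Co.V).obj B.a)) ≫ ((Co.str ≫ ν.app Co.V) ▷ G.obj ((ihom Co.V).obj B.a)) ≫
      Functor.LaxMonoidal.μ G Co.V ((ihom Co.V).obj B.a) ≫ G.map ((ihom.ev Co.V).app B.a) ≫ B.str
  rw [whisker_exchange_assoc, comp_whiskerRight]
  have nat := ν.naturality ((ihom.ev Co.V).app B.a)
  dsimp only [Functor.id_obj, Functor.comp_obj, curriedTensor_obj_obj, ihom.ev] at nat ⊢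
  rw [reassoc_of% nat, NatTrans.IsMonoidal.tensor_assoc (τ := ν)]
  simp only [MonoidalCategory.tensorHom_def, Category.assoc]

end Aux

/-- Let `𝒞` be symmetric monoidal closed, `F`, `G` lax monoidal
endofunctors, `μ : F ⟶ G` a monoidal natural transformation, and suppose the pullback
functor `μ^* : Alg^G ⥤ Alg^F` has a left adjoint `μ_!`.  If the `F`-algebra `A` is
`C`-initial for an `F`-coalgebra `C`, then `μ_!(A)` is `μ_*(C)`-initial. -/
theorem stmt3 [SymmetricCategory C] [MonoidalClosed C]
    {F G : C ⥤ C} [F.LaxMonoidal] [G.LaxMonoidal]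
    (μ : F ⟶ G) [NatTrans.IsMonoidal μ]
    (L : Endofunctor.Algebra F ⥤ Endofunctor.Algebra G)
    (adj : L ⊣ pullbackAlg μ)
    (Co : Endofunctor.Coalgebra F) (A : Endofunctor.Algebra F)
    (hA : IsCInitial F Co A) :
    IsCInitial G ((pushforwardCoalg μ).obj Co) (L.obj A) := by
  intro B
  set B' : Endofunctor.Algebra F := (pullbackAlg μ).obj B with hB'
  set HG : Endofunctor.Algebra G := homAlg G ((pushforwardCoalg μ).obj Co) B with hHG
  obtain ⟨φ, hφ, huniq⟩ := hA B'
  -- from the unique F-measuring φ, build an algebra hom A ⟶ μ^* HG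
  have hstr := pullback_homAlg F G μ Co B
  have hφ' : F.map (MonoidalClosed.curry φ) ≫ ((pullbackAlg μ).obj HG).str =
      A.str ≫ MonoidalClosed.curry φ := by
    have := (isMeasuring_iff_curry F Co A B' φ).mp hφ
    rw [hstr] at this
    exact this
  let f : A ⟶ (pullbackAlg μ).obj HG := ⟨MonoidalClosed.curry φ, hφ'⟩
  let g : L.obj A ⟶ HG := (adj.homEquiv A HG).symm f
  refine ⟨MonoidalClosed.uncurry g.f, ?_, ?_⟩
  · show IsMeasuring G ((pushforwardCoalg μ).obj Co) (L.obj A) B (MonoidalClosed.uncurry g.f)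
    erw [isMeasuring_iff_curry, MonoidalClosed.curry_uncurry]
    exact g.h
  · intro ψ hψ
    -- ψ gives an algebra hom L A ⟶ HG
    have hψ' : G.map (MonoidalClosed.curry ψ) ≫ HG.str =
        (L.obj A).str ≫ MonoidalClosed.curry ψ :=
      (isMeasuring_iff_curry G _ _ B ψ).mp hψ
    let g' : L.obj A ⟶ HG := ⟨MonoidalClosed.curry ψ, hψ'⟩
    let f' : A ⟶ (pullbackAlg μ).obj HG := adj.homEquiv A HG g'
    -- uncurry f'.f is an F-measuring to B', hence equals φ
    have hf' : IsMeasuring F Co A B' (MonoidalClosed.uncurry f'.f) := by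
      erw [isMeasuring_iff_curry, MonoidalClosed.curry_uncurry, hstr]
      exact f'.h
    have : MonoidalClosed.uncurry f'.f = φ := huniq _ hf'
    have hff : f' = f := by
      apply Endofunctor.Algebra.Hom.ext
      show f'.f = MonoidalClosed.curry φ
      erw [← this, MonoidalClosed.curry_uncurry]
    have hgg : g' = g := by
      have := congrArg (adj.homEquiv A HG).symm hff
      rwa [Equiv.symm_apply_apply] at this
    calc ψ = MonoidalClosed.uncurry (MonoidalClosed.curry ψ) :=
            (MonoidalClosed.uncurry_curry ψ).symm
      _ = MonoidalClosed.uncurry g'.f := rfl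
      _ = MonoidalClosed.uncurry g.f := by rw [hgg]

end PaperStmt
end

section
/- Let (𝒞, ⊗, I) be a monoidal category, (F, ∇^F, η^F) and (G, ∇^G, η^G) lax monoidal endofunctors of 𝒞, and ν : G ⟶ F and μ : F ⟶ G monoidal natural transformations such that for all objects X, Y one has ∇^F_{X,Y} ∘ (id_{F X} ⊗ ν_Y) = ∇^F_{X,Y} ∘ (ν_X ⊗ ν_Y) ∘ (μ_X ⊗ id_{G Y}) as morphisms F X ⊗ G Y ⟶ F(X ⊗ Y). Then for every F-coalgebra (C, χ) and all F-algebras (A, α), (B, β), every measuring φ : C ⊗ A ⟶ B from A to B by C (with respect to F) is also a measuring with respect to G from the G-algebra ν^*(A) = (A, α ∘ ν_A) to the G-algebra ν^*(B) = (B, β ∘ ν_B) by the G-coalgebra μ_*(C) = (C, μ_C ∘ χ). -/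
open CategoryTheory Category MonoidalCategory Limits

universe v u

namespace PaperStmt

variable {C : Type u} [Category.{v} C] [MonoidalCategory.{v} C]

/-- Given monoidal natural transformations `ν : G ⟶ F`, `μ : F ⟶ G` such
that `∇^F_{X,Y} ∘ (id ⊗ ν_Y) = ∇^F_{X,Y} ∘ (ν_X ⊗ ν_Y) ∘ (μ_X ⊗ id)`, every `F`-measuring
`φ : C ⊗ A ⟶ B` is also a `G`-measuring from `ν^*(A)` to `ν^*(B)` by `μ_*(C)`. -/
theorem stmt4 {F G : C ⥤ C} [F.LaxMonoidal] [G.LaxMonoidal]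
    (ν : G ⟶ F) (μ : F ⟶ G) [NatTrans.IsMonoidal ν] [NatTrans.IsMonoidal μ]
    (hcoeq : ∀ X Y : C,
      (F.obj X ◁ ν.app Y) ≫ Functor.LaxMonoidal.μ F X Y =
        (μ.app X ▷ G.obj Y) ≫ (ν.app X ⊗ₘ ν.app Y) ≫ Functor.LaxMonoidal.μ F X Y)
    (Co : Endofunctor.Coalgebra F) (A B : Endofunctor.Algebra F)
    (φ : Co.V ⊗ A.a ⟶ B.a) (hφ : IsMeasuring F Co A B φ) :
    IsMeasuring G ((pushforwardCoalg μ).obj Co)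
      ((pullbackAlg ν).obj A) ((pullbackAlg ν).obj B) φ := by
  unfold IsMeasuring at hφ ⊢
  show (Co.V ◁ (ν.app A.a ≫ A.str)) ≫ φ = ((Co.str ≫ μ.app Co.V) ▷ G.obj A.a) ≫
    Functor.LaxMonoidal.μ G Co.V A.a ≫ G.map φ ≫ ν.app B.a ≫ B.str
  have hnat : G.map φ ≫ ν.app B.a = ν.app (Co.V ⊗ A.a) ≫ F.map φ := ν.naturality φ
  calc (Co.V ◁ (ν.app A.a ≫ A.str)) ≫ φ
      = (Co.V ◁ ν.app A.a) ≫ (Co.V ◁ A.str) ≫ φ := by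
        rw [MonoidalCategory.whiskerLeft_comp, assoc]
    _ = (Co.V ◁ ν.app A.a) ≫ (Co.str ▷ F.obj A.a) ≫ Functor.LaxMonoidal.μ F Co.V A.a ≫
          F.map φ ≫ B.str := by rw [hφ]
    _ = (Co.str ▷ G.obj A.a) ≫ (F.obj Co.V ◁ ν.app A.a) ≫ Functor.LaxMonoidal.μ F Co.V A.a ≫
          F.map φ ≫ B.str := by rw [← whisker_exchange_assoc]
    _ = (Co.str ▷ G.obj A.a) ≫ (μ.app Co.V ▷ G.obj A.a) ≫ (ν.app Co.V ⊗ₘ ν.app A.a) ≫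
          Functor.LaxMonoidal.μ F Co.V A.a ≫ F.map φ ≫ B.str := by
        rw [reassoc_of% (hcoeq Co.V A.a)]
    _ = (Co.str ▷ G.obj A.a) ≫ (μ.app Co.V ▷ G.obj A.a) ≫
          Functor.LaxMonoidal.μ G Co.V A.a ≫ ν.app (Co.V ⊗ A.a) ≫ F.map φ ≫ B.str := by
        rw [NatTrans.IsMonoidal.tensor_assoc]
    _ = ((Co.str ≫ μ.app Co.V) ▷ G.obj A.a) ≫ Functor.LaxMonoidal.μ G Co.V A.a ≫
          G.map φ ≫ ν.app B.a ≫ B.str := by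
        simp only [comp_whiskerRight, assoc, reassoc_of% hnat]

end PaperStmt
end

section
/- Let (𝒞, ⊗, I) be a monoidal category, (F, ∇^F, η^F) and (G, ∇^G, η^G) lax monoidal endofunctors of 𝒞, and ν : G ⟶ F and μ : F ⟶ G monoidal natural transformations with ν ∘ μ = id_F. Then for every F-coalgebra (C, χ) and all F-algebras (A, α), (B, β), every measuring φ : C ⊗ A ⟶ B from A to B by C (with respect to F) is also a measuring with respect to G from the G-algebra ν^*(A) = (A, α ∘ ν_A) to the G-algebra ν^*(B) = (B, β ∘ ν_B) by the G-coalgebra μ_*(C) = (C, μ_C ∘ χ). -/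
open CategoryTheory Category MonoidalCategory Limits

universe v u

namespace PaperStmt

variable {C : Type u} [Category.{v} C] [MonoidalCategory.{v} C]

/-- Given monoidal natural transformations `ν : G ⟶ F`, `μ : F ⟶ G` with
`ν ∘ μ = id_F`, every `F`-measuring `φ : C ⊗ A ⟶ B` is also a `G`-measuring from `ν^*(A)`
to `ν^*(B)` by `μ_*(C)`. -/
theorem stmt5 {F G : C ⥤ C} [F.LaxMonoidal] [G.LaxMonoidal]
    (ν : G ⟶ F) (μ : F ⟶ G) [NatTrans.IsMonoidal ν] [NatTrans.IsMonoidal μ]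
    (hretr : μ ≫ ν = 𝟙 F)
    (Co : Endofunctor.Coalgebra F) (A B : Endofunctor.Algebra F)
    (φ : Co.V ⊗ A.a ⟶ B.a) (hφ : IsMeasuring F Co A B φ) :
    IsMeasuring G ((pushforwardCoalg μ).obj Co)
      ((pullbackAlg ν).obj A) ((pullbackAlg ν).obj B) φ := by
  have hν := congrArg (fun (t : F ⟶ F) => t.app Co.V) hretr
  simp only [NatTrans.comp_app, NatTrans.id_app] at hν
  unfold IsMeasuring at hφ ⊢
  show (Co.V ◁ (ν.app A.a ≫ A.str)) ≫ φ = ((Co.str ≫ μ.app Co.V) ▷ G.obj A.a) ≫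
    Functor.LaxMonoidal.μ G Co.V A.a ≫ G.map φ ≫ ν.app B.a ≫ B.str
  calc (Co.V ◁ (ν.app A.a ≫ A.str)) ≫ φ
      = (Co.V ◁ ν.app A.a) ≫ (Co.V ◁ A.str) ≫ φ := by
        rw [MonoidalCategory.whiskerLeft_comp, Category.assoc]
    _ = (Co.V ◁ ν.app A.a) ≫ (Co.str ▷ F.obj A.a) ≫ Functor.LaxMonoidal.μ F Co.V A.a ≫
          F.map φ ≫ B.str := by rw [hφ]
    _ = ((Co.str ≫ μ.app Co.V) ▷ G.obj A.a) ≫ Functor.LaxMonoidal.μ G Co.V A.a ≫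
          G.map φ ≫ ν.app B.a ≫ B.str := by
        rw [ν.naturality_assoc φ, NatTrans.IsMonoidal.tensor_assoc (τ := ν),
          MonoidalCategory.comp_whiskerRight, Category.assoc,
          ← tensorHom_def'_assoc, ← tensorHom_id (μ.app Co.V), tensorHom_comp_tensorHom_assoc,
          hν, Category.id_comp, tensorHom_def_assoc Co.str (ν.app A.a), id_tensorHom]

end PaperStmt
end

section
/- Let (𝒞, ⊗, I) be a monoidal category, F and G lax monoidal endofunctors, and μ : F ⟶ G a monoidal natural transformation. Suppose the pushforward functor μ_* : CoAlg^F ⥤ CoAlg^G has a right adjoint R, with counit ε : μ_* ∘ R ⟶ id. Then for every G-coalgebra (C, χ), all G-algebras (A, α), (B, β), and every measuring f : C ⊗ A ⟶ B from A to B by C with respect to G, the composite f ∘ (ε_C ⊗ id_A) : R(C) ⊗ A ⟶ B (where ε_C denotes the underlying 𝒞-morphism of the counit component at C, whose domain is the underlying object of R(C)) is a measuring with respect to F from the F-algebra μ^*(A) = (A, α ∘ μ_A) to the F-algebra μ^*(B) = (B, β ∘ μ_B) by the F-coalgebra R(C). -/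
open CategoryTheory Category MonoidalCategory Limits

universe v u

namespace PaperStmt

variable {C : Type u} [Category.{v} C] [MonoidalCategory.{v} C]

/-- Suppose the pushforward functor `μ_* : CoAlg^F ⥤ CoAlg^G` has a right
adjoint `R` with counit `ε`.  Then for every `G`-measuring `f : C ⊗ A ⟶ B`, the composite
`f ∘ (ε_C ⊗ id_A) : R(C) ⊗ A ⟶ B` is an `F`-measuring from `μ^*(A)` to `μ^*(B)` by `R(C)`. -/
theorem stmt8 {F G : C ⥤ C} [F.LaxMonoidal] [G.LaxMonoidal]
    (μ : F ⟶ G) [NatTrans.IsMonoidal μ]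
    (R : Endofunctor.Coalgebra G ⥤ Endofunctor.Coalgebra F)
    (adj : pushforwardCoalg μ ⊣ R)
    (Co : Endofunctor.Coalgebra G) (A B : Endofunctor.Algebra G)
    (f : Co.V ⊗ A.a ⟶ B.a) (hf : IsMeasuring G Co A B f) :
    IsMeasuring F (R.obj Co) ((pullbackAlg μ).obj A) ((pullbackAlg μ).obj B)
      (((adj.counit.app Co).f ▷ A.a) ≫ f) := by

  let e : (R.obj Co).V ⟶ Co.V := (adj.counit.app Co).f
  have hε : e ≫ Co.str = (R.obj Co).str ≫ μ.app _ ≫ G.map e := by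
    rw [← assoc]; exact ((adj.counit.app Co).h).symm
  show IsMeasuring F (R.obj Co) ((pullbackAlg μ).obj A) ((pullbackAlg μ).obj B)
      ((e ▷ A.a) ≫ f)
  unfold IsMeasuring at hf ⊢
  calc ((R.obj Co).V ◁ (μ.app A.a ≫ A.str)) ≫ (e ▷ A.a) ≫ f
      = ((R.obj Co).V ◁ μ.app A.a) ≫ (e ▷ G.obj A.a) ≫
          (Co.V ◁ A.str) ≫ f := by
        rw [MonoidalCategory.whiskerLeft_comp, assoc, whisker_exchange_assoc]
    _ = ((R.obj Co).V ◁ μ.app A.a) ≫ (e ▷ G.obj A.a) ≫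
          (Co.str ▷ G.obj A.a) ≫ Functor.LaxMonoidal.μ G Co.V A.a ≫ G.map f ≫ B.str := by
        rw [hf]
    _ = ((R.obj Co).V ◁ μ.app A.a) ≫ (((R.obj Co).str ≫ μ.app _ ≫ G.map e) ▷ G.obj A.a) ≫
          Functor.LaxMonoidal.μ G Co.V A.a ≫ G.map f ≫ B.str := by
        rw [← comp_whiskerRight_assoc, hε]
    _ = ((R.obj Co).str ▷ F.obj A.a) ≫ (μ.app _ ⊗ₘ μ.app A.a) ≫ (G.map e ▷ G.obj A.a) ≫
          Functor.LaxMonoidal.μ G Co.V A.a ≫ G.map f ≫ B.str := by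
        rw [comp_whiskerRight_assoc, comp_whiskerRight_assoc, tensorHom_def', assoc,
          ← whisker_exchange_assoc]
    _ = ((R.obj Co).str ▷ F.obj A.a) ≫ (μ.app _ ⊗ₘ μ.app A.a) ≫ Functor.LaxMonoidal.μ G (R.obj Co).V A.a ≫
          G.map (e ▷ A.a) ≫ G.map f ≫ B.str := by
        rw [Functor.LaxMonoidal.μ_natural_left_assoc]
    _ = ((R.obj Co).str ▷ F.obj A.a) ≫ Functor.LaxMonoidal.μ F (R.obj Co).V A.a ≫
          F.map ((e ▷ A.a) ≫ f) ≫ μ.app B.a ≫ B.str := by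
        rw [← NatTrans.IsMonoidal.tensor_assoc, ← G.map_comp_assoc, ← μ.naturality_assoc,
          F.map_comp, assoc]


end PaperStmt
end

section
/- Let (𝒞, ⊗, I) be a symmetric monoidal closed category and F a lax monoidal endofunctor of 𝒞. For all F-coalgebras (C, χ), (D, δ) and every F-algebra (B, β), the canonical isomorphism [C, [D, B]] ≅ [D ⊗ C, B] coming from the closed monoidal structure of 𝒞 is an isomorphism of F-algebras between the convolution algebra [C, [D, B]] (where [D, B] carries its convolution algebra structure) and the convolution algebra [D ⊗ C, B] (where D ⊗ C carries the tensor coalgebra structure). -/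
open CategoryTheory Category MonoidalCategory Limits

universe v u

namespace PaperStmt

variable {C : Type u} [Category.{v} C] [MonoidalCategory.{v} C]

variable [SymmetricCategory C] [MonoidalClosed C]

/-- The lax closed structure map `F̂ : F [X,Y] ⟶ [F X, F Y]` of a lax monoidal functor:
the adjunct of `F(ev_{X,Y}) ∘ ∇_{X,[X,Y]}`. -/
noncomputable def laxClosedMap (F : C ⥤ C) [F.LaxMonoidal] (X Y : C) :
    F.obj ((ihom X).obj Y) ⟶ (ihom (F.obj X)).obj (F.obj Y) :=
  MonoidalClosed.curry
    (Functor.LaxMonoidal.μ F X ((ihom X).obj Y) ≫ F.map ((ihom.ev X).app Y))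

/-- The structure map of the convolution algebra `[C, B]`: the composite
`F [C,B] ⟶ [F C, F B] ⟶ [C, F B] ⟶ [C, B]` given by `F̂`, precomposition with `χ` and
postcomposition with `β`. -/
noncomputable def convStr (F : C ⥤ C) [F.LaxMonoidal]
    (Co : Endofunctor.Coalgebra F) (B : Endofunctor.Algebra F) :
    F.obj ((ihom Co.V).obj B.a) ⟶ (ihom Co.V).obj B.a :=
  laxClosedMap F Co.V B.a ≫ (MonoidalClosed.pre Co.str).app (F.obj B.a) ≫
    (ihom Co.V).map B.str

/-- The convolution algebra `[C, B]` of an `F`-coalgebra `C` and an `F`-algebra `B`. -/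
noncomputable def convAlg (F : C ⥤ C) [F.LaxMonoidal]
    (Co : Endofunctor.Coalgebra F) (B : Endofunctor.Algebra F) :
    Endofunctor.Algebra F :=
  ⟨(ihom Co.V).obj B.a, convStr F Co B⟩

/-- The canonical morphism `[C, [D, B]] ⟶ [D ⊗ C, B]` coming from the closed monoidal
structure of `𝒞`. -/
noncomputable def canonMap (D Co B : C) :
    (ihom Co).obj ((ihom D).obj B) ⟶ (ihom (D ⊗ Co)).obj B :=
  MonoidalClosed.curry ((α_ D Co ((ihom Co).obj ((ihom D).obj B))).hom ≫
    (D ◁ (ihom.ev Co).app ((ihom D).obj B)) ≫ (ihom.ev D).app B)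

set_option linter.unusedSectionVars false in
lemma uncurry_convStr (F : C ⥤ C) [F.LaxMonoidal]
    (Co : Endofunctor.Coalgebra F) (B : Endofunctor.Algebra F) :
    MonoidalClosed.uncurry (convStr F Co B) =
      (Co.str ▷ F.obj ((ihom Co.V).obj B.a)) ≫
        Functor.LaxMonoidal.μ F Co.V ((ihom Co.V).obj B.a) ≫
        F.map ((ihom.ev Co.V).app B.a) ≫ B.str := by
  rw [convStr, ← Category.assoc, MonoidalClosed.uncurry_natural_right,
    MonoidalClosed.uncurry_natural_left, MonoidalClosed.uncurry_pre]
  rw [whisker_exchange_assoc, ← MonoidalClosed.uncurry_eq, laxClosedMap,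
    MonoidalClosed.uncurry_curry]
  simp

/-- The inverse of `canonMap`. -/
noncomputable def canonInvMap (D Co B : C) :
    (ihom (D ⊗ Co)).obj B ⟶ (ihom Co).obj ((ihom D).obj B) :=
  MonoidalClosed.curry (MonoidalClosed.curry
    ((α_ D Co ((ihom (D ⊗ Co)).obj B)).inv ≫ (ihom.ev (D ⊗ Co)).app B))

lemma uncurry_canonMap (D Co B : C) :
    MonoidalClosed.uncurry (canonMap D Co B) =
      (α_ D Co ((ihom Co).obj ((ihom D).obj B))).hom ≫
        (D ◁ (ihom.ev Co).app ((ihom D).obj B)) ≫ (ihom.ev D).app B := by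
  rw [canonMap, MonoidalClosed.uncurry_curry]

lemma canon_hom_inv (D Co B : C) :
    canonMap D Co B ≫ canonInvMap D Co B = 𝟙 _ := by
  apply MonoidalClosed.uncurry_injective
  apply MonoidalClosed.uncurry_injective
  rw [MonoidalClosed.uncurry_natural_left, canonInvMap, MonoidalClosed.uncurry_curry,
    ← MonoidalClosed.curry_natural_left, MonoidalClosed.uncurry_curry]
  rw [associator_inv_naturality_right_assoc, ← MonoidalClosed.uncurry_eq, canonMap,
    MonoidalClosed.uncurry_curry, Iso.inv_hom_id_assoc, MonoidalClosed.uncurry_id_eq_ev,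
    MonoidalClosed.uncurry_eq]

lemma canon_inv_hom (D Co B : C) :
    canonInvMap D Co B ≫ canonMap D Co B = 𝟙 _ := by
  apply MonoidalClosed.uncurry_injective
  rw [MonoidalClosed.uncurry_natural_left, canonMap, MonoidalClosed.uncurry_curry,
    MonoidalClosed.uncurry_id_eq_ev, associator_naturality_right_assoc,
    ← MonoidalCategory.whiskerLeft_comp_assoc,
    ← MonoidalClosed.uncurry_eq (canonInvMap D Co B), canonInvMap,
    MonoidalClosed.uncurry_curry]
  rw [← MonoidalClosed.uncurry_eq, MonoidalClosed.uncurry_curry, Iso.hom_inv_id_assoc]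

/-- For `F`-coalgebras `C`, `D` and an `F`-algebra `B`, the canonical
isomorphism `[C, [D, B]] ≅ [D ⊗ C, B]` from the closed monoidal structure is an
isomorphism of `F`-algebras between the convolution algebra `[C, [D, B]]` and the
convolution algebra `[D ⊗ C, B]` (with `D ⊗ C` the tensor coalgebra). -/

theorem stmt10 (F : C ⥤ C) [F.LaxMonoidal]
    (Co D : Endofunctor.Coalgebra F) (B : Endofunctor.Algebra F) :
    IsIso (canonMap D.V Co.V B.a) ∧
      F.map (canonMap D.V Co.V B.a) ≫ convStr F (tensorCoalg F D Co) B =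
        convStr F Co (convAlg F D B) ≫ canonMap D.V Co.V B.a := by
  constructor
  · exact ⟨canonInvMap D.V Co.V B.a, canon_hom_inv _ _ _, canon_inv_hom _ _ _⟩
  · delta tensorCoalg convAlg
    apply MonoidalClosed.uncurry_injective
    rw [MonoidalClosed.uncurry_natural_left, uncurry_convStr]
    dsimp only [tensorCoalg]
    rw [whisker_exchange_assoc,
      Functor.LaxMonoidal.μ_natural_right_assoc, ← F.map_comp_assoc,
      ← MonoidalClosed.uncurry_eq, uncurry_canonMap]
    rw [MonoidalClosed.uncurry_natural_left, uncurry_canonMap]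
    rw [associator_naturality_right_assoc, ← MonoidalCategory.whiskerLeft_comp_assoc,
      ← MonoidalClosed.uncurry_eq (convStr F Co ⟨(ihom D.V).obj B.a, convStr F D B⟩),
      uncurry_convStr]
    rw [MonoidalCategory.whiskerLeft_comp_assoc, MonoidalCategory.whiskerLeft_comp_assoc,
      MonoidalCategory.whiskerLeft_comp_assoc,
      ← MonoidalClosed.uncurry_eq (convStr F D B), uncurry_convStr,
      comp_whiskerRight, Category.assoc, F.map_comp, F.map_comp]
    dsimp only
    simp only [Category.assoc]
    rw [Functor.LaxMonoidal.associativity_assoc,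
      ← Functor.LaxMonoidal.μ_natural_right_assoc]
    simp only [MonoidalCategory.tensorHom_def, comp_whiskerRight, Category.assoc, Functor.comp_obj,
      Functor.id_obj, Functor.LaxMonoidal.μ_natural_right_assoc]
    rw [associator_naturality_middle_assoc, associator_naturality_left_assoc]
    simp only [← MonoidalCategory.whiskerLeft_comp_assoc]
    rw [whisker_exchange_assoc]
    simp only [MonoidalCategory.whiskerLeft_comp, Category.assoc,
      Functor.LaxMonoidal.μ_natural_right_assoc]

end PaperStmt
end

section
/- Let (𝒞, ⊗, I) be a monoidal category and (F, ∇, η) a lax monoidal endofunctor of 𝒞. Given F-algebras A, A', A'', F-coalgebras (C, χ), (D, δ), a measuring φ : C ⊗ A ⟶ A' from A to A' by C, and a measuring ψ : D ⊗ A' ⟶ A'' from A' to A'' by D, the composite ψ ∘ (id_D ⊗ φ) ∘ assoc : (D ⊗ C) ⊗ A ⟶ A'' (assoc the associator) is a measuring from A to A'' by the tensor coalgebra D ⊗ C. -/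
open CategoryTheory Category MonoidalCategory Limits

universe v u

namespace PaperStmt

variable {C : Type u} [Category.{v} C] [MonoidalCategory.{v} C]

/-- Given a measuring `φ : C ⊗ A ⟶ A'` and a measuring `ψ : D ⊗ A' ⟶ A''`,
the composite `ψ ∘ (id_D ⊗ φ) ∘ assoc : (D ⊗ C) ⊗ A ⟶ A''` is a measuring from `A` to `A''`
by the tensor coalgebra `D ⊗ C`. -/
theorem stmt11 (F : C ⥤ C) [F.LaxMonoidal]
    (A A' A'' : Endofunctor.Algebra F) (Co D : Endofunctor.Coalgebra F)
    (φ : Co.V ⊗ A.a ⟶ A'.a) (hφ : IsMeasuring F Co A A' φ)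
    (ψ : D.V ⊗ A'.a ⟶ A''.a) (hψ : IsMeasuring F D A' A'' ψ) :
    IsMeasuring F (tensorCoalg F D Co) A A''
      ((α_ D.V Co.V A.a).hom ≫ (D.V ◁ φ) ≫ ψ) := by
  unfold IsMeasuring tensorCoalg at *
  dsimp only at *
  calc ((D.V ⊗ Co.V) ◁ A.str) ≫ (α_ D.V Co.V A.a).hom ≫ (D.V ◁ φ) ≫ ψ
      = (α_ D.V Co.V (F.obj A.a)).hom ≫ (D.V ◁ ((Co.V ◁ A.str) ≫ φ)) ≫ ψ := by
        simp
    _ = (α_ D.V Co.V (F.obj A.a)).hom ≫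
        (D.V ◁ ((Co.str ▷ F.obj A.a) ≫ Functor.LaxMonoidal.μ F Co.V A.a ≫ F.map φ)) ≫
        ((D.V ◁ A'.str) ≫ ψ) := by rw [hφ]; simp
    _ = (α_ D.V Co.V (F.obj A.a)).hom ≫
        (D.V ◁ ((Co.str ▷ F.obj A.a) ≫ Functor.LaxMonoidal.μ F Co.V A.a ≫ F.map φ)) ≫
        ((D.str ▷ F.obj A'.a) ≫ Functor.LaxMonoidal.μ F D.V A'.a ≫ F.map ψ ≫ A''.str) := by
        rw [hψ]
    _ = (((D.str ⊗ₘ Co.str) ≫ Functor.LaxMonoidal.μ F D.V Co.V) ▷ F.obj A.a) ≫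
        Functor.LaxMonoidal.μ F (D.V ⊗ Co.V) A.a ≫
        F.map ((α_ D.V Co.V A.a).hom ≫ (D.V ◁ φ) ≫ ψ) ≫ A''.str := by
        simp only [Functor.map_comp, comp_whiskerRight, assoc,
          Functor.LaxMonoidal.associativity_assoc,
          ← Functor.LaxMonoidal.μ_natural_right_assoc,
          MonoidalCategory.whiskerLeft_comp, MonoidalCategory.tensorHom_def,
          associator_naturality_assoc, whisker_exchange_assoc,
          associator_naturality_left_assoc, associator_naturality_middle_assoc]

end PaperStmt
end

section
/- Let (𝒞, ⊗, I) be a monoidal category and (F, ∇, η) a lax monoidal endofunctor of 𝒞. For all F-algebras (A, α) and (B, β), the assignment f ↦ f ∘ λ_A (where λ_A : I ⊗ A ⟶ A is the left unitor) is a bijection between F-algebra morphisms from A to B and measurings from A to B by the unit coalgebra (I, η). -/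
open CategoryTheory Category MonoidalCategory Limits

universe v u

namespace PaperStmt

variable {C : Type u} [Category.{v} C] [MonoidalCategory.{v} C]

/-- The assignment `f ↦ f ∘ λ_A` is a bijection between `F`-algebra
morphisms `A ⟶ B` and measurings from `A` to `B` by the unit coalgebra `(I, η)`. -/
theorem stmt12 (F : C ⥤ C) [F.LaxMonoidal] (A B : Endofunctor.Algebra F) :
    ∃ e : (A ⟶ B) ≃ { φ : (unitCoalg F).V ⊗ A.a ⟶ B.a // IsMeasuring F (unitCoalg F) A B φ },
      ∀ f : A ⟶ B, (e f).val = (λ_ A.a).hom ≫ f.f := by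
  refine ⟨⟨fun f => ⟨(λ_ A.a).hom ≫ f.f, ?_⟩, fun φ => ⟨(λ_ A.a).inv ≫ φ.val, ?_⟩, ?_, ?_⟩,
    fun f => rfl⟩
  · have hf := f.h
    simp only [IsMeasuring, unitCoalg, F.map_comp]
    rw [leftUnitor_naturality_assoc, ← hf, Category.assoc,
      ← Functor.LaxMonoidal.left_unitality_assoc]
  · obtain ⟨φ, hφ⟩ := φ
    simp only [IsMeasuring, unitCoalg] at hφ ⊢
    have : A.str ≫ (λ_ A.a).inv ≫ φ = F.map ((λ_ A.a).inv ≫ φ) ≫ B.str := by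
      erw [leftUnitor_inv_naturality_assoc, hφ, F.map_comp, Category.assoc,
        Functor.LaxMonoidal.left_unitality_inv_assoc]
    exact this.symm
  · intro f; ext; simp
  · intro φ; ext; exact Iso.hom_inv_id_assoc _ _

end PaperStmt
end
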